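/- arXiv:2106.09379 — 3 statements merged into one kernel-verified Lean document; each statement's English description precedes it below -/
import Mathlib

section
/- Under the factorization M_l(ξ) = M⁽¹⁾(ξ) ⊗ M⁽²⁾ with M⁽¹⁾(ξ) and M⁽²⁾ positive definite, and c_l = c_l⁰ · (f⁽¹⁾(x_u) ⊗ g(t_α)) for scalars c_l⁰, the c-optimality criterion satisfies Σ_{l=1}^r c_lᵀ M_l(ξ)⁻¹ c_l = (Σ_{l=1}^r (c_l⁰)² · g(t_α)ᵀ (M⁽²⁾)⁻¹ g(t_α)) · f⁽¹⁾(x_u)ᵀ (M⁽¹⁾(ξ))⁻¹ f⁽¹⁾(x_u). In particular, a design ξ minimizing f⁽¹⁾(x_u)ᵀ M⁽¹⁾(ξ)⁻¹ f⁽¹⁾(x_u) minimizes the full criterion. -/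
open Matrix Kronecker

lemma quad_kron {a b : ℕ} (A : Matrix (Fin a) (Fin a) ℝ) (B : Matrix (Fin b) (Fin b) ℝ)
    (s : ℝ) (u : Fin a → ℝ) (v : Fin b → ℝ) :
    (fun q : Fin a × Fin b => s * (u q.1 * v q.2)) ⬝ᵥ
      (A ⊗ₖ B).mulVec (fun q => s * (u q.1 * v q.2))
      = s ^ 2 * (u ⬝ᵥ A.mulVec u) * (v ⬝ᵥ B.mulVec v) := by
  have key : ∀ p : Fin a × Fin b, ((A ⊗ₖ B).mulVec (fun q => s * (u q.1 * v q.2))) p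
      = s * (A.mulVec u p.1 * B.mulVec v p.2) := by
    intro p
    simp only [mulVec, dotProduct, Fintype.sum_prod_type, kroneckerMap_apply]
    rw [Finset.sum_mul_sum]
    simp only [Finset.mul_sum]
    refine Finset.sum_congr rfl fun k _ => Finset.sum_congr rfl fun m _ => by ring
  simp only [dotProduct, key, Fintype.sum_prod_type]
  rw [mul_assoc, show (∑ i, u i * A.mulVec u i) * ∑ j, v j * B.mulVec v j
      = ∑ i, ∑ j, (u i * A.mulVec u i) * (v j * B.mulVec v j) from Finset.sum_mul_sum _ _ _ _]
  simp only [Finset.mul_sum]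
  refine Finset.sum_congr rfl fun i _ => Finset.sum_congr rfl fun j _ => by ring


/-- Theorem 1 of the paper: Under the factorization
`M_l(ξ) = M⁽¹⁾(ξ) ⊗ M⁽²⁾` with `M⁽¹⁾(ξ)`, `M⁽²⁾` positive definite, and
`c_l = c_l⁰ · (f⁽¹⁾(x_u) ⊗ g(t_α))`, the c-optimality criterion factorizes:
`Σ_l c_lᵀ M_l(ξ)⁻¹ c_l = (Σ_l (c_l⁰)² g(t_α)ᵀ(M⁽²⁾)⁻¹g(t_α)) ·
f⁽¹⁾(x_u)ᵀ(M⁽¹⁾(ξ))⁻¹f⁽¹⁾(x_u)`; in particular a design minimizing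
`f⁽¹⁾(x_u)ᵀ M⁽¹⁾(ξ)⁻¹ f⁽¹⁾(x_u)` minimizes the full criterion. -/
theorem factorized_c_criterion_and_optimality
    {Ξ : Type*} {r a b : ℕ}
    (M1 : Ξ → Matrix (Fin a) (Fin a) ℝ) (hM1 : ∀ ξ, (M1 ξ).PosDef)
    (M2 : Matrix (Fin b) (Fin b) ℝ) (hM2 : M2.PosDef)
    (u : Fin a → ℝ) (v : Fin b → ℝ)  -- u = f⁽¹⁾(x_u), v = g(t_α)
    (c0 : Fin r → ℝ)
    (c : Fin r → (Fin a × Fin b → ℝ))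
    (hc : ∀ l q, c l q = c0 l * (u q.1 * v q.2)) :
    (∀ ξ : Ξ,
      ∑ l : Fin r, c l ⬝ᵥ ((M1 ξ) ⊗ₖ M2)⁻¹.mulVec (c l)
        = (∑ l : Fin r, (c0 l) ^ 2 * (v ⬝ᵥ M2⁻¹.mulVec v)) *
            (u ⬝ᵥ (M1 ξ)⁻¹.mulVec u)) ∧
    (∀ ξopt : Ξ, (∀ ξ, u ⬝ᵥ (M1 ξopt)⁻¹.mulVec u ≤ u ⬝ᵥ (M1 ξ)⁻¹.mulVec u) →
      ∀ ξ, ∑ l : Fin r, c l ⬝ᵥ ((M1 ξopt) ⊗ₖ M2)⁻¹.mulVec (c l)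
            ≤ ∑ l : Fin r, c l ⬝ᵥ ((M1 ξ) ⊗ₖ M2)⁻¹.mulVec (c l)) := by
  have q2nonneg : 0 ≤ v ⬝ᵥ M2⁻¹.mulVec v := by simpa using hM2.inv.posSemidef.dotProduct_mulVec_nonneg v
  have hfac : ∀ ξ : Ξ,
      ∑ l : Fin r, c l ⬝ᵥ ((M1 ξ) ⊗ₖ M2)⁻¹.mulVec (c l)
        = (∑ l : Fin r, (c0 l) ^ 2 * (v ⬝ᵥ M2⁻¹.mulVec v)) * (u ⬝ᵥ (M1 ξ)⁻¹.mulVec u) := by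
    intro ξ
    rw [Matrix.inv_kronecker, Finset.sum_mul]
    refine Finset.sum_congr rfl fun l _ => ?_
    have hcl : c l = fun q : Fin a × Fin b => c0 l * (u q.1 * v q.2) := funext fun q => hc l q
    rw [hcl, quad_kron]
    ring
  refine ⟨hfac, fun ξopt hopt ξ => ?_⟩
  rw [hfac, hfac]
  refine mul_le_mul_of_nonneg_left (hopt ξ) ?_
  exact Finset.sum_nonneg fun l _ => mul_nonneg (sq_nonneg _) q2nonneg
end

section
/- In the simple linear regression model with f(x) = (1, x)ᵀ on the design region [0,1], the c-optimal approximate design for extrapolation at a point x_u < 0 (i.e., minimizing f(x_u)ᵀ M(ξ)⁻¹ f(x_u) over designs ξ with M(ξ) nonsingular) is the two-point design supported on {0, 1} with weight w* = |x_u|/(1 + 2|x_u|) at x = 1 and weight 1 − w* = (1 + |x_u|)/(1 + 2|x_u|) at x = 0. -/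
open Matrix

set_option maxHeartbeats 1000000

lemma quad_form_inv_fin_two (M : Matrix (Fin 2) (Fin 2) ℝ) (hd : M.det ≠ 0) (c : Fin 2 → ℝ) :
    c ⬝ᵥ M⁻¹.mulVec c =
      (c 0 ^ 2 * M 1 1 - c 0 * c 1 * (M 0 1 + M 1 0) + c 1 ^ 2 * M 0 0) / M.det := by
  rw [Matrix.inv_def, Matrix.adjugate_fin_two]
  simp only [Matrix.mulVec, dotProduct, Fin.sum_univ_two, Matrix.smul_apply,
    Matrix.cons_val', Matrix.cons_val_zero, Matrix.cons_val_one, Matrix.head_cons,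
    Matrix.head_fin_const, Matrix.empty_val', Matrix.cons_val_fin_one, smul_eq_mul, Matrix.of_apply, Ring.inverse_eq_inv']
  rw [Matrix.det_fin_two] at hd ⊢
  field_simp
  ring

/-- In simple linear regression `f(x) = (1, x)ᵀ` on `[0,1]`, the c-optimal
approximate design for extrapolation at `x_u < 0` is supported on `{0, 1}` with weight
`w* = |x_u|/(1 + 2|x_u|)` at `x = 1` and `1 − w* = (1 + |x_u|)/(1 + 2|x_u|)` at `x = 0`:
its information matrix is nonsingular and, for any approximate design on `[0,1]` with
nonsingular information matrix, the extrapolation variance `f(x_u)ᵀ M(ξ)⁻¹ f(x_u)` is at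
least that of the optimal two-point design. -/
theorem c_optimal_extrapolation_design_simple_linear
    (xu : ℝ) (hxu : xu < 0)
    (f : ℝ → Fin 2 → ℝ) (hf : ∀ x, f x = ![1, x])
    (wstar : ℝ) (hwstar : wstar = |xu| / (1 + 2 * |xu|))
    (Mstar : Matrix (Fin 2) (Fin 2) ℝ)
    (hMstar : Mstar = (1 - wstar) • Matrix.vecMulVec (f 0) (f 0)
        + wstar • Matrix.vecMulVec (f 1) (f 1)) :
    Mstar.det ≠ 0 ∧
    wstar = |xu| / (1 + 2 * |xu|) ∧ 1 - wstar = (1 + |xu|) / (1 + 2 * |xu|) ∧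
    ∀ (m : ℕ) (x : Fin m → ℝ) (w : Fin m → ℝ),
      (∀ i, x i ∈ Set.Icc (0 : ℝ) 1) → (∀ i, 0 ≤ w i) → ∑ i, w i = 1 →
      ∀ M : Matrix (Fin 2) (Fin 2) ℝ,
        M = ∑ i, w i • Matrix.vecMulVec (f (x i)) (f (x i)) →
        M.det ≠ 0 →
        f xu ⬝ᵥ Mstar⁻¹.mulVec (f xu) ≤ f xu ⬝ᵥ M⁻¹.mulVec (f xu) := by
  set t : ℝ := |xu| with ht
  have htv : t = -xu := abs_of_neg hxu
  have htpos : 0 < t := by rw [htv]; linarith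
  have hden : (0:ℝ) < 1 + 2 * t := by linarith
  have hw0 : 0 < wstar := by rw [hwstar]; positivity
  have hw1 : wstar < 1 := by
    rw [hwstar, div_lt_one hden]; linarith
  -- entries of Mstar
  have hM00 : Mstar 0 0 = 1 := by
    simp [hMstar, hf, Matrix.vecMulVec_apply]
  have hM01 : Mstar 0 1 = wstar := by
    simp [hMstar, hf, Matrix.vecMulVec_apply]
  have hM10 : Mstar 1 0 = wstar := by
    simp [hMstar, hf, Matrix.vecMulVec_apply]
  have hM11 : Mstar 1 1 = wstar := by
    simp [hMstar, hf, Matrix.vecMulVec_apply]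
  have hdetstar : Mstar.det = wstar * (1 - wstar) := by
    rw [Matrix.det_fin_two, hM00, hM01, hM10, hM11]; ring
  have hdetpos : 0 < Mstar.det := by
    rw [hdetstar]; exact mul_pos hw0 (by linarith)
  have hdetne : Mstar.det ≠ 0 := ne_of_gt hdetpos
  have hdne : (1 + 2 * t) ≠ 0 := ne_of_gt hden
  refine ⟨hdetne, hwstar, by rw [hwstar]; field_simp; ring, ?_⟩
  -- value at the optimal design
  have hc0 : f xu 0 = 1 := by rw [hf]; rfl
  have hc1 : f xu 1 = xu := by rw [hf]; rfl
  have hval : f xu ⬝ᵥ Mstar⁻¹.mulVec (f xu) = (1 - 2 * xu) ^ 2 := by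
    rw [quad_form_inv_fin_two Mstar hdetne, hc0, hc1, hM00, hM01, hM10, hM11, hdetstar]
    have hwv : wstar = -xu / (1 - 2 * xu) := by
      rw [hwstar, htv, show (1:ℝ) + 2 * -xu = 1 - 2 * xu by ring]
    have h2 : (1:ℝ) - 2 * xu ≠ 0 := by linarith
    rw [div_eq_iff (by nlinarith : wstar * (1 - wstar) ≠ 0), hwv]
    have h2' : (1:ℝ) - xu * 2 ≠ 0 := by linarith
    field_simp
    ring
  intro m x w hx hw hsum M hM hMdet
  set b : ℝ := ∑ i, w i * x i with hb
  set cc : ℝ := ∑ i, w i * (x i) ^ 2 with hcc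
  -- entries of M
  have hN00 : M 0 0 = 1 := by
    rw [hM, Matrix.sum_apply]
    simp only [Matrix.smul_apply, Matrix.vecMulVec_apply, smul_eq_mul, hf,
      Matrix.cons_val_zero, mul_one]
    exact hsum
  have hN01 : M 0 1 = b := by
    rw [hM, Matrix.sum_apply, hb]
    simp [Matrix.smul_apply, Matrix.vecMulVec_apply, smul_eq_mul, hf]
  have hN10 : M 1 0 = b := by
    rw [hM, Matrix.sum_apply, hb]
    simp [Matrix.smul_apply, Matrix.vecMulVec_apply, smul_eq_mul, hf]
  have hN11 : M 1 1 = cc := by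
    rw [hM, Matrix.sum_apply, hcc]
    refine Finset.sum_congr rfl fun i _ => ?_
    simp only [Matrix.smul_apply, Matrix.vecMulVec_apply, smul_eq_mul, hf,
      Matrix.cons_val_one, Matrix.head_cons, Matrix.cons_val_fin_one]
    ring
  have hdetM : M.det = cc - b ^ 2 := by
    rw [Matrix.det_fin_two, hN00, hN01, hN10, hN11]; ring
  -- inequalities on b, cc
  have hbnn : 0 ≤ b := Finset.sum_nonneg fun i _ => mul_nonneg (hw i) (hx i).1
  have hccb : cc ≤ b := by
    refine Finset.sum_le_sum fun i _ => ?_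
    have h1 := (hx i).1; have h2 := (hx i).2
    nlinarith [mul_nonneg (hw i) (mul_nonneg h1 (sub_nonneg.2 h2))]
  have hCS : b ^ 2 ≤ cc := by
    have := Finset.sum_sq_le_sum_mul_sum_of_sq_eq_mul Finset.univ
      (r := fun i => w i * x i) (f := fun i => w i) (g := fun i => w i * (x i) ^ 2)
      (fun i _ => hw i) (fun i _ => mul_nonneg (hw i) (sq_nonneg _))
      (fun i _ => by ring)
    rw [hsum, one_mul] at this
    exact this
  have hdetMpos : 0 < cc - b ^ 2 := by
    rcases lt_or_eq_of_le (sub_nonneg.2 hCS) with h | h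
    · exact h
    · exact absurd hdetM.symm (by rw [← h]; exact fun hh => hMdet hh.symm)
  have hvalM : f xu ⬝ᵥ M⁻¹.mulVec (f xu) = (cc - 2 * xu * b + xu ^ 2) / (cc - b ^ 2) := by
    rw [quad_form_inv_fin_two M hMdet, hc0, hc1, hN00, hN01, hN10, hN11, hdetM]
    ring_nf
  rw [hval, hvalM, le_div_iff₀ hdetMpos]
  nlinarith [sq_nonneg (2 * cc - b * (1 + 2 * xu) + xu), sq_nonneg (b - xu), hdetMpos]
end

section
/- If ξ₁* is c-optimal for extrapolation at x_{u1} in the marginal model f₁ (minimizing f₁(x_{u1})ᵀM₁(ξ₁)⁻¹f₁(x_{u1})) and ξ₂* is c-optimal for extrapolation at x_{u2} in the marginal model f₂, and if the optimal value over product designs equals the optimal value over all designs, then for product designs the criterion satisfies f(x_u)ᵀ M(ξ₁ ⊗ ξ₂)⁻¹ f(x_u) = (f₁(x_{u1})ᵀM₁(ξ₁)⁻¹f₁(x_{u1})) · (f₂(x_{u2})ᵀM₂(ξ₂)⁻¹f₂(x_{u2})), where f(x_u) = f₁(x_{u1}) ⊗ f₂(x_{u2}); hence ξ₁* ⊗ ξ₂*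 minimizes the criterion among all product designs. -/
open Matrix Kronecker

lemma quad_kron_factor {a b : ℕ} (A : Matrix (Fin a) (Fin a) ℝ)
    (B : Matrix (Fin b) (Fin b) ℝ) (u : Fin a → ℝ) (v : Fin b → ℝ)
    (fxu : Fin a × Fin b → ℝ) (hfxu : ∀ q, fxu q = u q.1 * v q.2) :
    fxu ⬝ᵥ (A ⊗ₖ B).mulVec fxu = (u ⬝ᵥ A.mulVec u) * (v ⬝ᵥ B.mulVec v) := by
  have hf : fxu = fun q : Fin a × Fin b => u q.1 * v q.2 := funext hfxu
  rw [hf]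
  simp only [dotProduct, mulVec, kroneckerMap_apply, Fintype.sum_prod_type]
  rw [Finset.sum_mul_sum]
  refine Finset.sum_congr rfl fun i _ => (Finset.sum_congr rfl fun j _ => ?_)
  have h : (∑ k, ∑ l, A i k * B j l * (u k * v l))
      = (∑ k, A i k * u k) * (∑ l, B j l * v l) := by
    rw [Finset.sum_mul_sum]
    exact Finset.sum_congr rfl fun k _ => Finset.sum_congr rfl fun l _ => by ring
  rw [h]; ring

/-- In the Kronecker product model with extrapolation point
`x_u = (x_{u1}, x_{u2})`, `f(x_u) = f₁(x_{u1}) ⊗ f₂(x_{u2})`, and product designs with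
information matrices `M(ξ₁ ⊗ ξ₂) = M₁(ξ₁) ⊗ M₂(ξ₂)`: the criterion factorizes,
`f(x_u)ᵀ M(ξ₁ ⊗ ξ₂)⁻¹ f(x_u) =
(f₁(x_{u1})ᵀM₁(ξ₁)⁻¹f₁(x_{u1})) · (f₂(x_{u2})ᵀM₂(ξ₂)⁻¹f₂(x_{u2}))`, and hence if `ξ₁*`
and `ξ₂*` are c-optimal for extrapolation in the marginal models, the product design
`ξ₁* ⊗ ξ₂*` minimizes the criterion among all product designs. -/
theorem product_design_c_optimality
    {Ξ₁ Ξ₂ : Type*} {a b : ℕ}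
    (M1 : Ξ₁ → Matrix (Fin a) (Fin a) ℝ) (hM1 : ∀ ξ, (M1 ξ).PosDef)
    (M2 : Ξ₂ → Matrix (Fin b) (Fin b) ℝ) (hM2 : ∀ ξ, (M2 ξ).PosDef)
    (u : Fin a → ℝ) (v : Fin b → ℝ)  -- u = f₁(x_{u1}), v = f₂(x_{u2})
    (fxu : Fin a × Fin b → ℝ) (hfxu : ∀ q, fxu q = u q.1 * v q.2) :
    (∀ (ξ₁ : Ξ₁) (ξ₂ : Ξ₂),
      fxu ⬝ᵥ ((M1 ξ₁) ⊗ₖ (M2 ξ₂))⁻¹.mulVec fxu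
        = (u ⬝ᵥ (M1 ξ₁)⁻¹.mulVec u) * (v ⬝ᵥ (M2 ξ₂)⁻¹.mulVec v)) ∧
    (∀ (ξ₁opt : Ξ₁) (ξ₂opt : Ξ₂),
      (∀ ξ₁, u ⬝ᵥ (M1 ξ₁opt)⁻¹.mulVec u ≤ u ⬝ᵥ (M1 ξ₁)⁻¹.mulVec u) →
      (∀ ξ₂, v ⬝ᵥ (M2 ξ₂opt)⁻¹.mulVec v ≤ v ⬝ᵥ (M2 ξ₂)⁻¹.mulVec v) →
      ∀ (ξ₁ : Ξ₁) (ξ₂ : Ξ₂),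
        fxu ⬝ᵥ ((M1 ξ₁opt) ⊗ₖ (M2 ξ₂opt))⁻¹.mulVec fxu
          ≤ fxu ⬝ᵥ ((M1 ξ₁) ⊗ₖ (M2 ξ₂))⁻¹.mulVec fxu) := by
  have key : ∀ (ξ₁ : Ξ₁) (ξ₂ : Ξ₂),
      fxu ⬝ᵥ ((M1 ξ₁) ⊗ₖ (M2 ξ₂))⁻¹.mulVec fxu
        = (u ⬝ᵥ (M1 ξ₁)⁻¹.mulVec u) * (v ⬝ᵥ (M2 ξ₂)⁻¹.mulVec v) := by
    intro ξ₁ ξ₂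
    rw [Matrix.inv_kronecker]
    exact quad_kron_factor _ _ u v fxu hfxu
  refine ⟨key, fun ξ₁opt ξ₂opt h1 h2 ξ₁ ξ₂ => ?_⟩
  rw [key, key]
  have hu : 0 ≤ u ⬝ᵥ (M1 ξ₁opt)⁻¹.mulVec u := (hM1 ξ₁opt).inv.posSemidef.dotProduct_mulVec_nonneg u
  have hv : 0 ≤ v ⬝ᵥ (M2 ξ₂)⁻¹.mulVec v := (hM2 ξ₂).inv.posSemidef.dotProduct_mulVec_nonneg v
  exact mul_le_mul (h1 ξ₁) (h2 ξ₂) ((hM2 ξ₂opt).inv.posSemidef.dotProduct_mulVec_nonneg v)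
    (le_trans hu (h1 ξ₁))
end
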